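/- For all nonnegative integers k and m, the function f : ℍ∖ℝ → ℍ defined by f(q) := H_{k,m}(q,q̄) satisfies (□f)(q) = m·f(q) for every q ∈ ℍ∖ℝ; that is, the quaternionic Hermite polynomials of second index m are eigenfunctions of □ with eigenvalue m. -/

import Mathlib

open MeasureTheory Quaternion

noncomputable section

/-- two-argument quaternionic Hermite polynomial `H_{m,n}(a,b)` -/
def qHermite2 (m n : ℕ) (a b : ℍ[ℝ]) : ℍ[ℝ] :=
  ∑ j ∈ Finset.range (min m n + 1),
    (((-1 : ℝ) ^ j * (Nat.factorial m * Nat.factorial n) /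
        (Nat.factorial j * (Nat.factorial (m - j) * Nat.factorial (n - j)))) : ℝ) •
      (a ^ (m - j) * b ^ (n - j))

/-- quaternionic Hermite polynomial `H_{m,n}(q, q̄)` -/
def qHermite (m n : ℕ) (q : ℍ[ℝ]) : ℍ[ℝ] := qHermite2 m n q (star q)

/-- the sliced operator `□` at `q = x + yI`, `x = Re q`, `y = |Im q|`, `I = Im q/|Im q|`;
the partial derivatives of the slice function `g_I(x,y) = f(x + yI)` are taken through
the one-variable sections. -/
def Box (f : ℍ[ℝ] → ℍ[ℝ]) (q : ℍ[ℝ]) : ℍ[ℝ] :=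
  let x : ℝ := q.re
  let y : ℝ := ‖q.im‖
  let I : ℍ[ℝ] := ‖q.im‖⁻¹ • q.im
  (-(1 / 4 : ℝ)) • (deriv (deriv fun u : ℝ => f ((u : ℍ[ℝ]) + y • I)) x +
      deriv (deriv fun v : ℝ => f ((x : ℍ[ℝ]) + v • I)) y) +
    (1 / 2 : ℝ) • (x • deriv (fun u : ℝ => f ((u : ℍ[ℝ]) + y • I)) x +
      y • deriv (fun v : ℝ => f ((x : ℍ[ℝ]) + v • I)) y) +
    (1 / 2 : ℝ) • (I * (x • deriv (fun v : ℝ => f ((x : ℍ[ℝ]) + v • I)) y -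
      y • deriv (fun u : ℝ => f ((u : ℍ[ℝ]) + y • I)) x))



def Pf (I : ℍ[ℝ]) (a b : ℕ) (u v : ℝ) : ℍ[ℝ] :=
  ((u : ℍ[ℝ]) + v • I) ^ a * ((u : ℍ[ℝ]) - v • I) ^ b

lemma hasDerivAt_coeH (x : ℝ) : HasDerivAt (fun u : ℝ => (u : ℍ[ℝ])) 1 x := by
  have h : (fun u : ℝ => (u : ℍ[ℝ])) = fun u : ℝ => u • (1 : ℍ[ℝ]) := by
    funext u; rw [← Algebra.algebraMap_eq_smul_one]; rfl
  rw [h]; simpa using (hasDerivAt_id x).smul_const (1 : ℍ[ℝ])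

lemma hasDerivAt_lin (c d : ℍ[ℝ]) (x : ℝ) :
    HasDerivAt (fun u : ℝ => (u : ℍ[ℝ]) * c + d) c x := by
  simpa using ((hasDerivAt_coeH x).mul_const c).add_const d

lemma hasDerivAt_lin_pow (c d : ℍ[ℝ]) (h : Commute c d) (n : ℕ) (x : ℝ) :
    HasDerivAt (fun u : ℝ => ((u : ℍ[ℝ]) * c + d) ^ n)
      ((n : ℝ) • (c * ((x : ℍ[ℝ]) * c + d) ^ (n - 1))) x := by
  have hc : Commute c ((x : ℍ[ℝ]) * c + d) :=
    (((coe_commute x c).symm.mul_right (Commute.refl c)).add_right h)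
  induction n with
  | zero => simpa using hasDerivAt_const x (1 : ℍ[ℝ])
  | succ n ih =>
    have h2 : HasDerivAt (fun u : ℝ => ((u : ℍ[ℝ]) * c + d) ^ n * ((u : ℍ[ℝ]) * c + d))
        (((n : ℝ) • (c * ((x : ℍ[ℝ]) * c + d) ^ (n - 1))) * ((x : ℍ[ℝ]) * c + d)
          + ((x : ℍ[ℝ]) * c + d) ^ n * c) x := ih.mul (hasDerivAt_lin c d x)
    have h3 : (fun u : ℝ => ((u : ℍ[ℝ]) * c + d) ^ n * ((u : ℍ[ℝ]) * c + d))
        = fun u : ℝ => ((u : ℍ[ℝ]) * c + d) ^ (n + 1) := by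
      funext u; rw [← pow_succ]
    rw [h3] at h2
    convert h2 using 1
    set p := (x : ℍ[ℝ]) * c + d
    cases n with
    | zero => simp
    | succ n =>
      have : p ^ (n + 1 - 1) * p = p ^ (n + 1) := by rw [← pow_succ]; norm_num
      rw [smul_mul_assoc, mul_assoc, this]
      rw [Nat.add_sub_cancel, (hc.pow_right (n+1)).eq]
      push_cast
      rw [add_smul, one_smul]

-- specialization: u ↦ ((u:ℍ)+e)^n has derivative n • ((x:ℍ)+e)^(n-1)
lemma hasDerivAt_add_pow (e : ℍ[ℝ]) (n : ℕ) (x : ℝ) :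
    HasDerivAt (fun u : ℝ => ((u : ℍ[ℝ]) + e) ^ n)
      ((n : ℝ) • ((x : ℍ[ℝ]) + e) ^ (n - 1)) x := by
  have := hasDerivAt_lin_pow 1 e (Commute.one_left e) n x
  simpa using this

-- v ↦ ((x:ℍ) + v • c)^n has derivative n • (c * ((x:ℍ)+y•c)^(n-1)) at y
lemma hasDerivAt_smul_pow (c : ℍ[ℝ]) (x : ℝ) (n : ℕ) (y : ℝ) :
    HasDerivAt (fun v : ℝ => ((x : ℍ[ℝ]) + v • c) ^ n)
      ((n : ℝ) • (c * ((x : ℍ[ℝ]) + y • c) ^ (n - 1))) y := by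
  have h : ∀ v : ℝ, (x : ℍ[ℝ]) + v • c = (v : ℍ[ℝ]) * c + (x : ℍ[ℝ]) := by
    intro v; rw [add_comm, Algebra.smul_def]; rfl
  simp only [h]
  exact hasDerivAt_lin_pow c x ((coe_commute x c).symm) n y

lemma hasDerivAt_Pf_u (I : ℍ[ℝ]) (a b : ℕ) (v : ℝ) (x : ℝ) :
    HasDerivAt (fun u : ℝ => Pf I a b u v)
      ((a : ℝ) • Pf I (a - 1) b x v + (b : ℝ) • Pf I a (b - 1) x v) x := by
  have h1 := hasDerivAt_add_pow (v • I) a x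
  have h2 : HasDerivAt (fun u : ℝ => ((u : ℍ[ℝ]) - v • I) ^ b)
      ((b : ℝ) • ((x : ℍ[ℝ]) - v • I) ^ (b - 1)) x := by
    simpa [sub_eq_add_neg] using hasDerivAt_add_pow (-(v • I)) b x
  have := h1.fun_mul h2
  simp only [Pf]
  refine this.congr_deriv (Eq.symm ?_)
  rw [smul_mul_assoc, mul_smul_comm]

lemma hasDerivAt_Pf_v (I : ℍ[ℝ]) (a b : ℕ) (x : ℝ) (y : ℝ) :
    HasDerivAt (fun v : ℝ => Pf I a b x v)
      ((a : ℝ) • (I * Pf I (a - 1) b x y) - (b : ℝ) • (I * Pf I a (b - 1) x y)) y := by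
  have h1 := hasDerivAt_smul_pow I x a y
  have h2 : HasDerivAt (fun v : ℝ => ((x : ℍ[ℝ]) - v • I) ^ b)
      ((b : ℝ) • (-I * ((x : ℍ[ℝ]) - y • I) ^ (b - 1))) y := by
    have := hasDerivAt_smul_pow (-I) x b y
    simpa [sub_eq_add_neg, smul_neg] using this
  have h := h1.fun_mul h2
  simp only [Pf]
  refine h.congr_deriv (Eq.symm ?_)
  have hcomm : Commute I ((x : ℍ[ℝ]) + y • I) :=
    ((coe_commute x I).symm).add_right ((Commute.refl I).smul_right y)
  rw [smul_mul_assoc, mul_assoc, mul_smul_comm, sub_eq_add_neg]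
  congr 1
  rw [neg_mul, mul_neg, ← smul_neg]
  congr 2
  rw [← mul_assoc, (hcomm.pow_right a).eq, mul_assoc]

lemma commute_zw (I : ℍ[ℝ]) (x y : ℝ) :
    Commute ((x : ℍ[ℝ]) - y • I) ((x : ℍ[ℝ]) + y • I) := by
  have h1 : Commute ((x : ℍ[ℝ])) ((x : ℍ[ℝ]) + y • I) :=
    (coe_commute x _)
  have h2 : Commute (y • I) ((x : ℍ[ℝ]) + y • I) :=
    (((coe_commute x I).symm).add_right ((Commute.refl I).smul_right y)).smul_left y
  exact (h1.sub_left h2)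

lemma key_w (I : ℍ[ℝ]) (x y : ℝ) (a b : ℕ) :
    (b : ℝ) • Pf I a b x y
      = (b : ℝ) • (x • Pf I a (b - 1) x y - y • (I * Pf I a (b - 1) x y)) := by
  cases b with
  | zero => simp
  | succ s =>
    congr 1
    show Pf I a (s + 1) x y = x • Pf I a (s + 1 - 1) x y - y • (I * Pf I a (s + 1 - 1) x y)
    rw [Nat.add_sub_cancel]
    simp only [Pf]
    have hc : Commute ((x : ℍ[ℝ]) + y • I) ((x : ℍ[ℝ]) - y • I) := (commute_zw I x y).symm
    rw [pow_succ' ((x : ℍ[ℝ]) - y • I) s, ← mul_assoc, (hc.pow_left a).eq, mul_assoc]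
    rw [sub_mul, Quaternion.coe_mul_eq_smul, smul_mul_assoc]

lemma box_term (I : ℍ[ℝ]) (hI2 : I * I = -1) (a b : ℕ) (x y : ℝ) (r : ℝ) :
    (-(1/4 : ℝ)) • (r • ((a : ℝ) • ((↑(a-1) : ℝ) • Pf I (a-1-1) b x y + (b : ℝ) • Pf I (a-1) (b-1) x y)
          + (b : ℝ) • ((a : ℝ) • Pf I (a-1) (b-1) x y + (↑(b-1) : ℝ) • Pf I a (b-1-1) x y))
        + r • ((a : ℝ) • (I * ((↑(a-1) : ℝ) • (I * Pf I (a-1-1) b x y) - (b : ℝ) • (I * Pf I (a-1) (b-1) x y)))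
          - (b : ℝ) • (I * ((a : ℝ) • (I * Pf I (a-1) (b-1) x y) - (↑(b-1) : ℝ) • (I * Pf I a (b-1-1) x y)))))
      + (1/2 : ℝ) • (x • (r • ((a : ℝ) • Pf I (a-1) b x y + (b : ℝ) • Pf I a (b-1) x y))
          + y • (r • ((a : ℝ) • (I * Pf I (a-1) b x y) - (b : ℝ) • (I * Pf I a (b-1) x y))))
      + (1/2 : ℝ) • (I * (x • (r • ((a : ℝ) • (I * Pf I (a-1) b x y) - (b : ℝ) • (I * Pf I a (b-1) x y)))
          - y • (r • ((a : ℝ) • Pf I (a-1) b x y + (b : ℝ) • Pf I a (b-1) x y))))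
    = (r * (b : ℝ)) • Pf I a b x y - (r * (a : ℝ) * (b : ℝ)) • Pf I (a-1) (b-1) x y := by
  rw [mul_smul r ((b : ℝ)), key_w I x y a b]
  simp only [smul_sub, smul_add, mul_sub, mul_add, mul_smul_comm, ← mul_assoc, hI2,
    neg_one_mul, smul_neg, smul_smul]
  module

def cH (k m j : ℕ) : ℝ :=
  (-1 : ℝ) ^ j * (Nat.factorial k * Nat.factorial m) /
    (Nat.factorial j * (Nat.factorial (k - j) * Nat.factorial (m - j)))

lemma cH_rec (k m i : ℕ) (hik : i + 1 ≤ k) (him : i + 1 ≤ m) :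
    cH k m (i+1) * ((i:ℝ) + 1) + cH k m i * ((k - i : ℕ) : ℝ) * ((m - i : ℕ) : ℝ) = 0 := by
  have hk1 : k - i = (k - (i+1)) + 1 := by omega
  have hm1 : m - i = (m - (i+1)) + 1 := by omega
  set K := k - (i+1)
  set M := m - (i+1)
  have hif : (Nat.factorial i : ℝ) ≠ 0 := Nat.cast_ne_zero.mpr (Nat.factorial_ne_zero i)
  have hKf : (Nat.factorial K : ℝ) ≠ 0 := Nat.cast_ne_zero.mpr (Nat.factorial_ne_zero K)
  have hMf : (Nat.factorial M : ℝ) ≠ 0 := Nat.cast_ne_zero.mpr (Nat.factorial_ne_zero M)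
  have hi1 : ((i : ℝ) + 1) ≠ 0 := by positivity
  have hK1 : ((K : ℝ) + 1) ≠ 0 := by positivity
  have hM1 : ((M : ℝ) + 1) ≠ 0 := by positivity
  rw [cH, cH, hk1, hm1, Nat.factorial_succ, Nat.factorial_succ K, Nat.factorial_succ M]
  push_cast
  field_simp
  ring

lemma stage2 (k m : ℕ) (I : ℍ[ℝ]) (x y : ℝ) :
    ∑ j ∈ Finset.range (min k m + 1),
        ((cH k m j * ((m - j : ℕ) : ℝ)) • Pf I (k-j) (m-j) x y
          - (cH k m j * ((k - j : ℕ) : ℝ) * ((m - j : ℕ) : ℝ)) • Pf I (k-j-1) (m-j-1) x y)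
      = (m : ℝ) • ∑ j ∈ Finset.range (min k m + 1), cH k m j • Pf I (k-j) (m-j) x y := by
  set n := min k m with hn
  rw [Finset.smul_sum, Finset.sum_sub_distrib]
  have key0 : ∑ j ∈ Finset.range (n+1), (cH k m j * (j : ℝ)) • Pf I (k-j) (m-j) x y
      + ∑ j ∈ Finset.range (n+1),
          (cH k m j * ((k - j : ℕ) : ℝ) * ((m - j : ℕ) : ℝ)) • Pf I (k-j-1) (m-j-1) x y = 0 := by
    rw [Finset.sum_range_succ' (fun j => (cH k m j * (j : ℝ)) • Pf I (k-j) (m-j) x y) n]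
    rw [Finset.sum_range_succ]
    have h0 : (cH k m 0 * ((0:ℕ) : ℝ)) • Pf I (k-0) (m-0) x y = 0 := by simp
    have hDn : (cH k m n * ((k - n : ℕ) : ℝ) * ((m - n : ℕ) : ℝ)) • Pf I (k-n-1) (m-n-1) x y = 0 := by
      have : k - n = 0 ∨ m - n = 0 := by omega
      rcases this with h | h <;> rw [h] <;> simp
    rw [h0, hDn, add_zero, add_zero, ← Finset.sum_add_distrib]
    refine Finset.sum_eq_zero fun i hi => ?_
    have hi' : i < n := Finset.mem_range.mp hi
    have hik : i + 1 ≤ k := by omega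
    have him : i + 1 ≤ m := by omega
    have hidx1 : k - (i+1) = k - i - 1 := by omega
    have hidx2 : m - (i+1) = m - i - 1 := by omega
    rw [hidx1, hidx2, ← add_smul]
    have hc0 : cH k m (i+1) * ((i+1 : ℕ) : ℝ) + cH k m i * ((k - i : ℕ) : ℝ) * ((m - i : ℕ) : ℝ) = 0 := by
      have := cH_rec k m i hik him
      push_cast
      push_cast at this
      linarith
    rw [hc0, zero_smul]
  have h1 : ∀ j ∈ Finset.range (n+1),
      (cH k m j * ((m - j : ℕ) : ℝ)) • Pf I (k-j) (m-j) x y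
        = (m : ℝ) • (cH k m j • Pf I (k-j) (m-j) x y) - (cH k m j * (j : ℝ)) • Pf I (k-j) (m-j) x y := by
    intro j hj
    have hjm : j ≤ m := le_trans (Nat.lt_succ_iff.mp (Finset.mem_range.mp hj)) (by omega)
    rw [smul_smul, ← sub_smul]
    congr 1
    rw [Nat.cast_sub hjm]
    ring
  rw [Finset.sum_congr rfl h1, Finset.sum_sub_distrib, sub_sub, sub_eq_self]
  exact key0

/-- The quaternionic Hermite polynomials of second index `m` are
eigenfunctions of `□` on `ℍ∖ℝ` with eigenvalue `m`. -/
theorem stmt7 (k m : ℕ) (q : ℍ[ℝ]) (hq : q.im ≠ 0) :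
    Box (fun p => qHermite k m p) q = (m : ℝ) • qHermite k m q := by
  have hy0 : ‖q.im‖ ≠ 0 := norm_ne_zero_iff.mpr hq
  simp only [Box]
  set x : ℝ := q.re with hxdef
  set y : ℝ := ‖q.im‖ with hydef
  set I : ℍ[ℝ] := y⁻¹ • q.im with hIdef
  have hyI : y • I = q.im := by rw [hIdef, smul_smul, mul_inv_cancel₀ hy0, one_smul]
  have hIre : I.re = 0 := by rw [hIdef]; simp
  have hstar : star I = -I := Quaternion.star_eq_neg.mpr hIre
  have hnorm : normSq I = 1 := by
    have h2 : normSq q.im = y * y := normSq_eq_norm_mul_self q.im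
    rw [hIdef, Quaternion.normSq_smul, h2]
    field_simp
  have hI2 : I * I = -1 := by
    have h : I * I = -(I * star I) := by rw [hstar, mul_neg, neg_neg]
    rw [h, Quaternion.self_mul_star, hnorm]
    simp
  have hq' : (x : ℍ[ℝ]) + y • I = q := by rw [hyI]; exact q.re_add_im

  set n := min k m with hn
  have hslice : ∀ u v : ℝ, qHermite k m ((u : ℍ[ℝ]) + v • I)
      = ∑ j ∈ Finset.range (n+1), cH k m j • Pf I (k-j) (m-j) u v := by
    intro u v
    have hstar2 : star ((u : ℍ[ℝ]) + v • I) = (u : ℍ[ℝ]) - v • I := by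
      rw [star_add, Quaternion.star_coe, Quaternion.star_smul, hstar, smul_neg, ← sub_eq_add_neg]
    simp only [qHermite, qHermite2, hstar2, cH, Pf, ← hn]
  have hfu : (fun u : ℝ => qHermite k m ((u : ℍ[ℝ]) + y • I))
      = fun u : ℝ => ∑ j ∈ Finset.range (n+1), cH k m j • Pf I (k-j) (m-j) u y :=
    funext fun u => hslice u y
  have hfv : (fun v : ℝ => qHermite k m ((x : ℍ[ℝ]) + v • I))
      = fun v : ℝ => ∑ j ∈ Finset.range (n+1), cH k m j • Pf I (k-j) (m-j) x v :=
    funext fun v => hslice x v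
  rw [hfu, hfv]
  -- first derivative in u, at every point
  have hDu : ∀ u : ℝ, HasDerivAt
      (fun u : ℝ => ∑ j ∈ Finset.range (n+1), cH k m j • Pf I (k-j) (m-j) u y)
      (∑ j ∈ Finset.range (n+1), cH k m j •
        ((↑(k-j) : ℝ) • Pf I (k-j-1) (m-j) u y + (↑(m-j) : ℝ) • Pf I (k-j) (m-j-1) u y)) u :=
    fun u => HasDerivAt.fun_sum fun j _ => (hasDerivAt_Pf_u I (k-j) (m-j) y u).const_smul (cH k m j)
  have e1 : deriv (fun u : ℝ => ∑ j ∈ Finset.range (n+1), cH k m j • Pf I (k-j) (m-j) u y)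
      = fun u : ℝ => ∑ j ∈ Finset.range (n+1), cH k m j •
        ((↑(k-j) : ℝ) • Pf I (k-j-1) (m-j) u y + (↑(m-j) : ℝ) • Pf I (k-j) (m-j-1) u y) :=
    funext fun u => (hDu u).deriv
  have hDu2 : HasDerivAt
      (fun u : ℝ => ∑ j ∈ Finset.range (n+1), cH k m j •
        ((↑(k-j) : ℝ) • Pf I (k-j-1) (m-j) u y + (↑(m-j) : ℝ) • Pf I (k-j) (m-j-1) u y))
      (∑ j ∈ Finset.range (n+1), cH k m j •
        ((↑(k-j) : ℝ) • ((↑(k-j-1) : ℝ) • Pf I (k-j-1-1) (m-j) x y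
            + (↑(m-j) : ℝ) • Pf I (k-j-1) (m-j-1) x y)
          + (↑(m-j) : ℝ) • ((↑(k-j) : ℝ) • Pf I (k-j-1) (m-j-1) x y
            + (↑(m-j-1) : ℝ) • Pf I (k-j) (m-j-1-1) x y))) x :=
    HasDerivAt.fun_sum fun j _ =>
      (((hasDerivAt_Pf_u I (k-j-1) (m-j) y x).const_smul ((↑(k-j) : ℝ))).add
        ((hasDerivAt_Pf_u I (k-j) (m-j-1) y x).const_smul ((↑(m-j) : ℝ)))).const_smul (cH k m j)
  -- first derivative in v, at every point
  have hDv : ∀ v : ℝ, HasDerivAt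
      (fun v : ℝ => ∑ j ∈ Finset.range (n+1), cH k m j • Pf I (k-j) (m-j) x v)
      (∑ j ∈ Finset.range (n+1), cH k m j •
        ((↑(k-j) : ℝ) • (I * Pf I (k-j-1) (m-j) x v)
          - (↑(m-j) : ℝ) • (I * Pf I (k-j) (m-j-1) x v))) v :=
    fun v => HasDerivAt.fun_sum fun j _ => (hasDerivAt_Pf_v I (k-j) (m-j) x v).const_smul (cH k m j)
  have e2 : deriv (fun v : ℝ => ∑ j ∈ Finset.range (n+1), cH k m j • Pf I (k-j) (m-j) x v)
      = fun v : ℝ => ∑ j ∈ Finset.range (n+1), cH k m j •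
        ((↑(k-j) : ℝ) • (I * Pf I (k-j-1) (m-j) x v)
          - (↑(m-j) : ℝ) • (I * Pf I (k-j) (m-j-1) x v)) :=
    funext fun v => (hDv v).deriv
  have hDv2 : HasDerivAt
      (fun v : ℝ => ∑ j ∈ Finset.range (n+1), cH k m j •
        ((↑(k-j) : ℝ) • (I * Pf I (k-j-1) (m-j) x v)
          - (↑(m-j) : ℝ) • (I * Pf I (k-j) (m-j-1) x v)))
      (∑ j ∈ Finset.range (n+1), cH k m j •
        ((↑(k-j) : ℝ) • (I * ((↑(k-j-1) : ℝ) • (I * Pf I (k-j-1-1) (m-j) x y)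
            - (↑(m-j) : ℝ) • (I * Pf I (k-j-1) (m-j-1) x y)))
          - (↑(m-j) : ℝ) • (I * ((↑(k-j) : ℝ) • (I * Pf I (k-j-1) (m-j-1) x y)
            - (↑(m-j-1) : ℝ) • (I * Pf I (k-j) (m-j-1-1) x y))))) y :=
    HasDerivAt.fun_sum fun j _ =>
      ((((hasDerivAt_Pf_v I (k-j-1) (m-j) x y).const_mul I).const_smul ((↑(k-j) : ℝ))).sub
        (((hasDerivAt_Pf_v I (k-j) (m-j-1) x y).const_mul I).const_smul ((↑(m-j) : ℝ)))).const_smul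
        (cH k m j)
  simp only [e1, e2]
  rw [hDu2.deriv, hDv2.deriv]
  conv_rhs => rw [← hq', hslice x y]
  rw [hn] at *
  calc _ = ∑ j ∈ Finset.range (min k m + 1),
        ((cH k m j * ((m - j : ℕ) : ℝ)) • Pf I (k-j) (m-j) x y
          - (cH k m j * ((k - j : ℕ) : ℝ) * ((m - j : ℕ) : ℝ)) • Pf I (k-j-1) (m-j-1) x y) := by
        simp only [Finset.smul_sum, Finset.mul_sum, ← Finset.sum_add_distrib,
          ← Finset.sum_sub_distrib]
        refine Finset.sum_congr rfl fun j hj => ?_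
        exact box_term I hI2 (k-j) (m-j) x y (cH k m j)
    _ = (m : ℝ) • ∑ j ∈ Finset.range (min k m + 1), cH k m j • Pf I (k-j) (m-j) x y :=
        stage2 k m I x y
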